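/- CTL is strictly less expressive than Strategic Construction Logic (SCL): (i) every CTL formula has an equivalent SCL formula (obtained by the recursive translation that maps AXφ to ⟨∠⁰⟩Xφ, A(φUχ) to ⟨∠⁰⟩(φUχ), A(φRχ) to ⟨∠⁰⟩(φRχ), dualizes for E, and commutes with atoms and Boolean connectives); and (ii) the SCL formula ⟨∠¹⟩X[∠⁰]X¬p has no equivalent CTL formula. -/
import Mathlib


set_option linter.unusedVariables false

/-! ## Models -/

structure Mdl (S : Type) where
  rel : S → S → Prop
  val : ℕ → Set S
  cost : S → S → ℕ

namespace Mdl
variable {S : Type}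

/-- A proper model: serial relation and positive costs. -/
def IsModel (M : Mdl S) : Prop := (∀ s, ∃ t, M.rel s t) ∧ ∀ s t, 0 < M.cost s t

def Serial (M : Mdl S) : Prop := ∀ s, ∃ t, M.rel s t

def remove (M : Mdl S) (A : Set (S × S)) : Mdl S :=
  { M with rel := fun a b => M.rel a b ∧ (a, b) ∉ A }

def add (M : Mdl S) (A : Set (S × S)) : Mdl S :=
  { M with rel := fun a b => M.rel a b ∨ (a, b) ∈ A }

/-- The set of edges `A` is finite with total cost at most `n`. -/
def costLe (M : Mdl S) (A : Set (S × S)) (n : ℕ) : Prop :=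
  ∃ F : Finset (S × S), A = ↑F ∧ ∑ e ∈ F, M.cost e.1 e.2 ≤ n

end Mdl

abbrev PModel (S : Type) := Mdl S × S
abbrev Strat (S : Type) := PModel S → Set (S × S)
abbrev MPath (S : Type) := ℕ → PModel S

/-- A demonic strategy outputs a subset of the edges of the given model. -/
def IsDemonic {S : Type} (σ : Strat S) : Prop :=
  ∀ Ms : PModel S, σ Ms ⊆ {e : S × S | Ms.1.rel e.1 e.2}

/-- An angelic strategy outputs a set of non-edges of the given model. -/
def IsAngelic {S : Type} (σ : Strat S) : Prop :=
  ∀ Ms : PModel S, σ Ms ⊆ {e : S × S | ¬ Ms.1.rel e.1 e.2}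

/-! ### Demonic (SDL) paths -/

def DStep {S : Type} (σ : Strat S) (x y : PModel S) : Prop :=
  y.1 = x.1.remove (σ x) ∧ y.1.Serial ∧ y.1.rel x.2 y.2

def DCompat {S : Type} (σ : Strat S) (π : MPath S) : Prop := ∀ i, DStep σ (π i) (π (i+1))

/-- `σ` is an `n`-strategy: on every compatible path each removed set has cost at most `n`. -/
def DBound {S : Type} (σ : Strat S) (n : ℕ) : Prop :=
  ∀ π : MPath S, DCompat σ π → ∀ i, (π i).1.costLe (σ (π i)) n

/-! ### Angelic (SCL) paths -/

def AStep {S : Type} (σ : Strat S) (x y : PModel S) : Prop :=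
  y.1 = x.1.add (σ x) ∧ y.1.rel x.2 y.2

def ACompat {S : Type} (σ : Strat S) (π : MPath S) : Prop := ∀ i, AStep σ (π i) (π (i+1))

def ABound {S : Type} (σ : Strat S) (n : ℕ) : Prop :=
  ∀ π : MPath S, ACompat σ π → ∀ i, (π i).1.costLe (σ (π i)) n

/-! ### Update (SUL) paths: angel budget `n`, demon budget `m` -/

def UStep {S : Type} (Sa Sd : Strat S) (n m : ℕ) (x y : PModel S) : Prop :=
  x.1.costLe (Sa x) n ∧ x.1.costLe (Sd x) m ∧
  y.1 = (x.1.remove (Sd x)).add (Sa x) ∧ y.1.Serial ∧ y.1.rel x.2 y.2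

def UCompat {S : Type} (Sa Sd : Strat S) (n m : ℕ) (π : MPath S) : Prop :=
  ∀ i, UStep Sa Sd n m (π i) (π (i+1))

/-! ## SDL -/

mutual
inductive SDLF : Type
  | atom : ℕ → SDLF
  | neg : SDLF → SDLF
  | and : SDLF → SDLF → SDLF
  | dia : ℕ → SDLP → SDLF
inductive SDLP : Type
  | nxt : SDLF → SDLP
  | untl : SDLF → SDLF → SDLP
  | rls : SDLF → SDLF → SDLP
end

mutual
def SDLSat {S : Type} : PModel S → SDLF → Prop
  | Ms, .atom p => Ms.2 ∈ Ms.1.val p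
  | Ms, .neg φ => ¬ SDLSat Ms φ
  | Ms, .and φ χ => SDLSat Ms φ ∧ SDLSat Ms χ
  | Ms, .dia n ψ => ∃ σ : Strat S, IsDemonic σ ∧ DBound σ n ∧
      ∀ π : MPath S, π 0 = Ms → DCompat σ π → SDLPSat π ψ
def SDLPSat {S : Type} : MPath S → SDLP → Prop
  | π, .nxt φ => SDLSat (π 1) φ
  | π, .untl φ χ => ∃ j, SDLSat (π j) χ ∧ ∀ i < j, SDLSat (π i) φ
  | π, .rls φ χ => (∀ j, SDLSat (π j) χ) ∨ ∃ k, SDLSat (π k) φ ∧ ∀ i ≤ k, SDLSat (π i) χ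
end

/-! ## SCL -/

mutual
inductive SCLF : Type
  | atom : ℕ → SCLF
  | neg : SCLF → SCLF
  | and : SCLF → SCLF → SCLF
  | dia : ℕ → SCLP → SCLF
inductive SCLP : Type
  | nxt : SCLF → SCLP
  | untl : SCLF → SCLF → SCLP
  | rls : SCLF → SCLF → SCLP
end

mutual
def SCLSat {S : Type} : PModel S → SCLF → Prop
  | Ms, .atom p => Ms.2 ∈ Ms.1.val p
  | Ms, .neg φ => ¬ SCLSat Ms φ
  | Ms, .and φ χ => SCLSat Ms φ ∧ SCLSat Ms χ
  | Ms, .dia n ψ => ∃ σ : Strat S, IsAngelic σ ∧ ABound σ n ∧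
      ∀ π : MPath S, π 0 = Ms → ACompat σ π → SCLPSat π ψ
def SCLPSat {S : Type} : MPath S → SCLP → Prop
  | π, .nxt φ => SCLSat (π 1) φ
  | π, .untl φ χ => ∃ j, SCLSat (π j) χ ∧ ∀ i < j, SCLSat (π i) φ
  | π, .rls φ χ => (∀ j, SCLSat (π j) χ) ∨ ∃ k, SCLSat (π k) φ ∧ ∀ i ≤ k, SCLSat (π i) χ
end

/-! ## SUL -/

/-- Coalitions `C ⊆ {∠, ★}`. -/
inductive Coal : Type
  | both : Coal
  | onlyAngel : Coal
  | onlyDemon : Coal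
  | neither : Coal

mutual
inductive SULF : Type
  | atom : ℕ → SULF
  | neg : SULF → SULF
  | and : SULF → SULF → SULF
  | strat : Coal → ℕ → ℕ → SULP → SULF
inductive SULP : Type
  | nxt : SULF → SULP
  | untl : SULF → SULF → SULP
  | rls : SULF → SULF → SULP
end

mutual
def SULSat {S : Type} : PModel S → SULF → Prop
  | Ms, .atom p => Ms.2 ∈ Ms.1.val p
  | Ms, .neg φ => ¬ SULSat Ms φ
  | Ms, .and φ χ => SULSat Ms φ ∧ SULSat Ms χ
  | Ms, .strat .both n m ψ =>
      -- ⟨⟨∠ⁿ,★ᵐ⟩⟩ψ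
      ∃ Sa : Strat S, IsAngelic Sa ∧ ∃ Sd : Strat S, IsDemonic Sd ∧
        ∀ π : MPath S, π 0 = Ms → UCompat Sa Sd n m π → SULPSat π ψ
  | Ms, .strat .onlyAngel n m ψ =>
      -- ⟨⟨∠^{n,m}⟩⟩ψ : angel has budget n, demon budget m
      ∃ Sa : Strat S, IsAngelic Sa ∧ ∀ Sd : Strat S, IsDemonic Sd →
        ∀ π : MPath S, π 0 = Ms → UCompat Sa Sd n m π → SULPSat π ψ
  | Ms, .strat .onlyDemon n m ψ =>
      -- ⟨⟨★^{n,m}⟩⟩ψ : demon has budget n, angel budget m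
      ∃ Sd : Strat S, IsDemonic Sd ∧ ∀ Sa : Strat S, IsAngelic Sa →
        ∀ π : MPath S, π 0 = Ms → UCompat Sa Sd m n π → SULPSat π ψ
  | Ms, .strat .neither n m ψ =>
      -- ⟨⟨∅^{n,m}⟩⟩ψ
      ∀ Sa : Strat S, IsAngelic Sa → ∀ Sd : Strat S, IsDemonic Sd →
        ∀ π : MPath S, π 0 = Ms → UCompat Sa Sd n m π → SULPSat π ψ
def SULPSat {S : Type} : MPath S → SULP → Prop
  | π, .nxt φ => SULSat (π 1) φ
  | π, .untl φ χ => ∃ j, SULSat (π j) χ ∧ ∀ i < j, SULSat (π i) φ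
  | π, .rls φ χ => (∀ j, SULSat (π j) χ) ∨ ∃ k, SULSat (π k) φ ∧ ∀ i ≤ k, SULSat (π i) χ
end

/-! ## Obstruction Logic -/

mutual
inductive OLF : Type
  | atom : ℕ → OLF
  | neg : OLF → OLF
  | and : OLF → OLF → OLF
  | dia : ℕ → OLP → OLF
inductive OLP : Type
  | nxt : OLF → OLP
  | untl : OLF → OLF → OLP
  | rls : OLF → OLF → OLP
end

/-- An OL `n`-strategy over the fixed model `M`. -/
def IsOLStrategy {S : Type} (M : Mdl S) (σ : S → Set (S × S)) (n : ℕ) : Prop :=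
  ∀ s, σ s ⊆ {e : S × S | M.rel e.1 e.2} ∧ M.costLe (σ s) n ∧
    ∃ t, M.rel s t ∧ (s, t) ∉ σ s

def OLCompat {S : Type} (M : Mdl S) (σ : S → Set (S × S)) (π : ℕ → S) : Prop :=
  ∀ i, M.rel (π i) (π (i+1)) ∧ (π i, π (i+1)) ∉ σ (π i)

mutual
def OLSat {S : Type} (M : Mdl S) : S → OLF → Prop
  | s, .atom p => s ∈ M.val p
  | s, .neg φ => ¬ OLSat M s φ
  | s, .and φ χ => OLSat M s φ ∧ OLSat M s χ
  | s, .dia n ψ => ∃ σ : S → Set (S × S), IsOLStrategy M σ n ∧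
      ∀ π : ℕ → S, π 0 = s → OLCompat M σ π → OLPSat M π ψ
def OLPSat {S : Type} (M : Mdl S) : (ℕ → S) → OLP → Prop
  | π, .nxt φ => OLSat M (π 1) φ
  | π, .untl φ χ => ∃ j, OLSat M (π j) χ ∧ ∀ i < j, OLSat M (π i) φ
  | π, .rls φ χ => (∀ j, OLSat M (π j) χ) ∨ ∃ k, OLSat M (π k) φ ∧ ∀ i ≤ k, OLSat M (π i) χ
end

/-! ## CTL -/

inductive CTLF : Type
  | atom : ℕ → CTLF
  | neg : CTLF → CTLF
  | and : CTLF → CTLF → CTLF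
  | ax : CTLF → CTLF
  | ex : CTLF → CTLF
  | au : CTLF → CTLF → CTLF
  | ar : CTLF → CTLF → CTLF
  | eu : CTLF → CTLF → CTLF
  | er : CTLF → CTLF → CTLF

def IsPath {S : Type} (M : Mdl S) (π : ℕ → S) : Prop := ∀ i, M.rel (π i) (π (i+1))

def CTLSat {S : Type} (M : Mdl S) : S → CTLF → Prop
  | s, .atom p => s ∈ M.val p
  | s, .neg φ => ¬ CTLSat M s φ
  | s, .and φ χ => CTLSat M s φ ∧ CTLSat M s χ
  | s, .ax φ => ∀ π : ℕ → S, π 0 = s → IsPath M π → CTLSat M (π 1) φ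
  | s, .ex φ => ∃ π : ℕ → S, π 0 = s ∧ IsPath M π ∧ CTLSat M (π 1) φ
  | s, .au φ χ => ∀ π : ℕ → S, π 0 = s → IsPath M π →
      ∃ j, CTLSat M (π j) χ ∧ ∀ i < j, CTLSat M (π i) φ
  | s, .ar φ χ => ∀ π : ℕ → S, π 0 = s → IsPath M π →
      ((∀ j, CTLSat M (π j) χ) ∨ ∃ k, CTLSat M (π k) φ ∧ ∀ i ≤ k, CTLSat M (π i) χ)
  | s, .eu φ χ => ∃ π : ℕ → S, π 0 = s ∧ IsPath M π ∧
      ∃ j, CTLSat M (π j) χ ∧ ∀ i < j, CTLSat M (π i) φ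
  | s, .er φ χ => ∃ π : ℕ → S, π 0 = s ∧ IsPath M π ∧
      ((∀ j, CTLSat M (π j) χ) ∨ ∃ k, CTLSat M (π k) φ ∧ ∀ i ≤ k, CTLSat M (π i) χ)

/-! ## Statement 1: CTL ≺ SCL -/

/-- The recursive translation from CTL to SCL. -/
def ctlToSCL : CTLF → SCLF
  | .atom p => .atom p
  | .neg φ => .neg (ctlToSCL φ)
  | .and φ χ => .and (ctlToSCL φ) (ctlToSCL χ)
  | .ax φ => .dia 0 (.nxt (ctlToSCL φ))
  | .au φ χ => .dia 0 (.untl (ctlToSCL φ) (ctlToSCL χ))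
  | .ar φ χ => .dia 0 (.rls (ctlToSCL φ) (ctlToSCL χ))
  | .ex φ => .neg (.dia 0 (.nxt (.neg (ctlToSCL φ))))
  | .eu φ χ => .neg (.dia 0 (.rls (.neg (ctlToSCL φ)) (.neg (ctlToSCL χ))))
  | .er φ χ => .neg (.dia 0 (.untl (.neg (ctlToSCL φ)) (.neg (ctlToSCL χ))))

/-- The SCL formula `⟨∠¹⟩X[∠⁰]X¬p`, where `[∠⁰]X¬p = ¬⟨∠⁰⟩¬(X¬p) = ¬⟨∠⁰⟩Xp`
and `p` is atom `0`. -/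
def sclWitness : SCLF :=
  SCLF.dia 1 (SCLP.nxt (SCLF.neg (SCLF.dia 0 (SCLP.nxt (SCLF.atom 0)))))


/-! ## Auxiliary lemmas -/

lemma Mdl.add_empty {S : Type} (M : Mdl S) : M.add ∅ = M := by
  cases M with
  | mk r v c =>
    show Mdl.mk (fun a b => r a b ∨ (a, b) ∈ (∅ : Set (S × S))) v c = Mdl.mk r v c
    congr 1
    funext a b
    simp

lemma Mdl.add_rel {S : Type} (M : Mdl S) (A : Set (S × S)) {a b : S} (h : M.rel a b) :
    (M.add A).rel a b := Or.inl h

lemma Mdl.costLe_empty {S : Type} (M : Mdl S) (n : ℕ) : M.costLe ∅ n :=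
  ⟨∅, by simp, by simp⟩

lemma Mdl.costLe_eq_empty {S : Type} (M : Mdl S) (n : ℕ)
    (h : ∀ a b, n < M.cost a b) {A : Set (S × S)} (hA : M.costLe A n) : A = ∅ := by
  obtain ⟨F, rfl, hF⟩ := hA
  suffices hFe : F = ∅ by simp [hFe]
  by_contra hne
  obtain ⟨e, he⟩ := Finset.nonempty_iff_ne_empty.mpr hne
  have h1 : M.cost e.1 e.2 ≤ ∑ x ∈ F, M.cost x.1 x.2 :=
    Finset.single_le_sum (f := fun x : S × S => M.cost x.1 x.2) (fun _ _ => Nat.zero_le _) he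
  have h2 := h e.1 e.2
  omega

lemma empty_strat_angelic {S : Type} : IsAngelic (fun _ : PModel S => (∅ : Set (S × S))) :=
  fun _ => Set.empty_subset _

lemma empty_strat_abound {S : Type} (n : ℕ) :
    ABound (fun _ : PModel S => (∅ : Set (S × S))) n :=
  fun _ _ i => Mdl.costLe_empty _ n

/-- Characterization of `⟨∠⁰⟩ψ` on proper models. -/
lemma dia0_iff {S : Type} (M : Mdl S) (hM : M.IsModel) (s : S) (ψ : SCLP) :
    SCLSat (M, s) (.dia 0 ψ) ↔
      ∀ π : ℕ → S, π 0 = s → IsPath M π → SCLPSat (fun i => (M, π i)) ψ := by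
  simp only [SCLSat]
  constructor
  · rintro ⟨σ, hang, hbd, hall⟩ π hπ0 hpath
    let ρ : MPath S := fun n =>
      Nat.rec (M, s) (fun n ih => (ih.1.add (σ ih), π (n+1))) n
    have hρs : ∀ n, ρ (n+1) = ((ρ n).1.add (σ (ρ n)), π (n+1)) := fun n => rfl
    have hst : ∀ n, (ρ n).2 = π n := by
      intro n; cases n with
      | zero => exact hπ0.symm
      | succ k => rfl
    have hmono : ∀ n, (ρ n).1.cost = M.cost ∧ ∀ a b, M.rel a b → (ρ n).1.rel a b := by
      intro n
      induction n with
      | zero => exact ⟨rfl, fun _ _ h => h⟩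
      | succ k ih =>
        refine ⟨ih.1, fun a b h => ?_⟩
        exact Mdl.add_rel _ _ (ih.2 a b h)
    have hcomp : ACompat σ ρ := by
      intro n
      refine ⟨rfl, ?_⟩
      show ((ρ n).1.add (σ (ρ n))).rel (ρ n).2 (π (n+1))
      rw [hst n]
      exact Mdl.add_rel _ _ ((hmono n).2 _ _ (hpath n))
    have hempty : ∀ n, σ (ρ n) = ∅ := by
      intro n
      have hc := hbd ρ hcomp n
      refine Mdl.costLe_eq_empty _ 0 ?_ hc
      intro a b
      rw [(hmono n).1]
      exact hM.2 a b
    have hmod : ∀ n, (ρ n).1 = M := by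
      intro n
      induction n with
      | zero => rfl
      | succ k ih =>
        rw [hρs k]
        show (ρ k).1.add (σ (ρ k)) = M
        rw [hempty k, ih, Mdl.add_empty]
    have hρ : ρ = fun i => (M, π i) := by
      funext i
      exact Prod.ext (hmod i) (hst i)
    have := hall ρ rfl hcomp
    rwa [hρ] at this
  · intro h
    refine ⟨fun _ => ∅, empty_strat_angelic, empty_strat_abound 0, ?_⟩
    intro π hπ0 hcomp
    have hmod : ∀ n, (π n).1 = M := by
      intro n
      induction n with
      | zero => rw [hπ0]
      | succ k ih =>
        have := (hcomp k).1
        rw [this, ih, Mdl.add_empty]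
    have hpath : IsPath M (fun i => (π i).2) := by
      intro i
      have h2 := (hcomp i).2
      rwa [hmod (i+1)] at h2
    have h0 : (π 0).2 = s := by rw [hπ0]
    have := h (fun i => (π i).2) h0 hpath
    have hπ : π = fun i => (M, (π i).2) := by
      funext i
      exact Prod.ext (hmod i) rfl
    rwa [← hπ] at this

/-- Duality between Until and Release. -/
lemma until_not_release (A C : ℕ → Prop) :
    (∃ j, C j ∧ ∀ i < j, A i) ↔ ¬((∀ j, ¬C j) ∨ ∃ k, ¬A k ∧ ∀ i ≤ k, ¬C i) := by
  classical
  constructor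
  · rintro ⟨j, hC, hA⟩ (h | ⟨k, hk, hkC⟩)
    · exact h j hC
    · rcases le_or_gt j k with hle | hlt
      · exact hkC j hle hC
      · exact hk (hA k hlt)
  · intro h
    by_contra hno
    push_neg at hno
    apply h
    by_cases hc : ∃ j, C j
    · have hj := Nat.find_spec hc
      obtain ⟨i, hij, hiA⟩ := hno _ hj
      have hiex : ∃ i, ¬ A i := ⟨i, hiA⟩
      refine Or.inr ⟨Nat.find hiex, Nat.find_spec hiex, ?_⟩
      intro m hm hCm
      have h1 : Nat.find hc ≤ m := Nat.find_min' hc hCm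
      have h2 : Nat.find hiex ≤ i := Nat.find_min' hiex hiA
      omega
    · push_neg at hc
      exact Or.inl hc

lemma release_not_until (A C : ℕ → Prop) :
    ((∀ j, C j) ∨ ∃ k, A k ∧ ∀ i ≤ k, C i) ↔ ¬(∃ j, ¬C j ∧ ∀ i < j, ¬A i) := by
  have h := until_not_release (fun i => ¬A i) (fun j => ¬C j)
  simp only [not_not] at h
  rw [h, not_not]

lemma scl_neg_iff {S : Type} (Ms : PModel S) (φ : SCLF) :
    SCLSat Ms (.neg φ) ↔ ¬ SCLSat Ms φ := by simp [SCLSat]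

lemma ctl_to_scl_correct : ∀ φ : CTLF, ∀ (S : Type) (M : Mdl S), M.IsModel → ∀ s : S,
    CTLSat M s φ ↔ SCLSat (M, s) (ctlToSCL φ) := by
  intro φ
  induction φ with
  | atom p => intro S M hM s; simp [CTLSat, ctlToSCL, SCLSat]
  | neg φ ih =>
    intro S M hM s
    simp only [CTLSat, ctlToSCL, SCLSat]
    exact not_congr (ih S M hM s)
  | and φ χ ihφ ihχ =>
    intro S M hM s
    simp only [CTLSat, ctlToSCL, SCLSat]
    exact and_congr (ihφ S M hM s) (ihχ S M hM s)
  | ax φ ih =>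
    intro S M hM s
    simp only [CTLSat, ctlToSCL]
    rw [dia0_iff M hM]
    simp only [SCLPSat]
    exact forall_congr' fun π => forall_congr' fun _ => forall_congr' fun _ =>
      ih S M hM (π 1)
  | au φ χ ihφ ihχ =>
    intro S M hM s
    simp only [CTLSat, ctlToSCL]
    rw [dia0_iff M hM]
    simp only [SCLPSat]
    refine forall_congr' fun π => forall_congr' fun _ => forall_congr' fun _ => ?_
    exact exists_congr fun j => and_congr (ihχ S M hM (π j))
      (forall_congr' fun i => forall_congr' fun _ => ihφ S M hM (π i))
  | ar φ χ ihφ ihχ =>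
    intro S M hM s
    simp only [CTLSat, ctlToSCL]
    rw [dia0_iff M hM]
    simp only [SCLPSat]
    refine forall_congr' fun π => forall_congr' fun _ => forall_congr' fun _ => ?_
    exact or_congr (forall_congr' fun j => ihχ S M hM (π j))
      (exists_congr fun k => and_congr (ihφ S M hM (π k))
        (forall_congr' fun i => forall_congr' fun _ => ihχ S M hM (π i)))
  | ex φ ih =>
    intro S M hM s
    simp only [CTLSat, ctlToSCL]
    rw [scl_neg_iff, dia0_iff M hM]
    simp only [SCLPSat, scl_neg_iff]
    simp only [not_forall, exists_prop]
    refine exists_congr fun π => and_congr_right fun _ => and_congr_right fun _ => ?_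
    rw [not_not]
    exact ih S M hM (π 1)
  | eu φ χ ihφ ihχ =>
    intro S M hM s
    simp only [CTLSat, ctlToSCL]
    rw [scl_neg_iff, dia0_iff M hM]
    simp only [SCLPSat, scl_neg_iff]
    simp only [not_forall, exists_prop]
    refine exists_congr fun π => and_congr_right fun _ => and_congr_right fun _ => ?_
    rw [← until_not_release (fun i => SCLSat (M, π i) (ctlToSCL φ))
      (fun j => SCLSat (M, π j) (ctlToSCL χ))]
    exact exists_congr fun j => and_congr (ihχ S M hM (π j))
      (forall_congr' fun i => forall_congr' fun _ => ihφ S M hM (π i))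
  | er φ χ ihφ ihχ =>
    intro S M hM s
    simp only [CTLSat, ctlToSCL]
    rw [scl_neg_iff, dia0_iff M hM]
    simp only [SCLPSat, scl_neg_iff]
    simp only [not_forall, exists_prop]
    refine exists_congr fun π => and_congr_right fun _ => and_congr_right fun _ => ?_
    rw [← release_not_until (fun i => SCLSat (M, π i) (ctlToSCL φ))
      (fun j => SCLSat (M, π j) (ctlToSCL χ))]
    exact or_congr (forall_congr' fun j => ihχ S M hM (π j))
      (exists_congr fun k => and_congr (ihφ S M hM (π k))
        (forall_congr' fun i => forall_congr' fun _ => ihχ S M hM (π i)))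

/-! ## Part (ii): the counterexample models -/

def crel : ℕ → ℕ → Prop := fun a b => (a = 0 ∧ b = 1) ∨ (a ≠ 0 ∧ b = a)

def MA : Mdl ℕ := ⟨crel, fun _ => {1}, fun _ _ => 1⟩
def MB : Mdl ℕ := ⟨crel, fun _ => {1}, fun _ _ => 2⟩

lemma MA_isModel : MA.IsModel := by
  constructor
  · intro s
    by_cases h : s = 0
    · exact ⟨1, Or.inl ⟨h, rfl⟩⟩
    · exact ⟨s, Or.inr ⟨h, rfl⟩⟩
  · intro s t; exact Nat.one_pos

lemma MB_isModel : MB.IsModel := by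
  constructor
  · intro s
    by_cases h : s = 0
    · exact ⟨1, Or.inl ⟨h, rfl⟩⟩
    · exact ⟨s, Or.inr ⟨h, rfl⟩⟩
  · intro s t; exact Nat.two_pos

/-- CTL cannot see the cost function. -/
lemma ctl_ext {S : Type} (M M' : Mdl S) (hr : M.rel = M'.rel) (hv : M.val = M'.val) :
    ∀ ψ : CTLF, ∀ s, CTLSat M s ψ ↔ CTLSat M' s ψ := by
  intro ψ
  induction ψ with
  | atom p => intro s; simp [CTLSat, hv]
  | neg φ ih => intro s; simp [CTLSat, ih]
  | and φ χ ihφ ihχ => intro s; simp [CTLSat, ihφ, ihχ]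
  | ax φ ih => intro s; simp [CTLSat, IsPath, hr, ih]
  | ex φ ih => intro s; simp [CTLSat, IsPath, hr, ih]
  | au φ χ ihφ ihχ => intro s; simp [CTLSat, IsPath, hr, ihφ, ihχ]
  | ar φ χ ihφ ihχ => intro s; simp [CTLSat, IsPath, hr, ihφ, ihχ]
  | eu φ χ ihφ ihχ => intro s; simp [CTLSat, IsPath, hr, ihφ, ihχ]
  | er φ χ ihφ ihχ => intro s; simp [CTLSat, IsPath, hr, ihφ, ihχ]

/-- `⟨∠⁰⟩Xp` holds at `(MB, 1)`. -/
lemma dia0_at_MB1 : SCLSat (MB, 1) (SCLF.dia 0 (SCLP.nxt (SCLF.atom 0))) := by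
  rw [dia0_iff MB MB_isModel]
  intro π hπ0 hpath
  simp only [SCLPSat, SCLSat]
  have h := hpath 0
  rw [hπ0] at h
  show π 1 ∈ (MB.val 0)
  rcases h with ⟨h1, _⟩ | ⟨_, h2⟩
  · omega
  · rw [h2]; rfl

/-- The witness fails at `(MB, 0)`. -/
lemma not_witness_MB : ¬ SCLSat (MB, 0) sclWitness := by
  rw [sclWitness]
  simp only [SCLSat]
  rintro ⟨σ, hang, hbd, hall⟩
  -- build compatible path 0, 1, 1, 1, ...
  let ρ : MPath ℕ := fun n =>
    Nat.rec (MB, 0) (fun _ ih => (ih.1.add (σ ih), 1)) n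
  have hρs : ∀ n, ρ (n+1) = ((ρ n).1.add (σ (ρ n)), 1) := fun _ => rfl
  have hst : ∀ n, (ρ n).2 = if n = 0 then 0 else 1 := by
    intro n; cases n with
    | zero => rfl
    | succ k => rfl
  have hmono : ∀ n, (ρ n).1.cost = MB.cost ∧ ∀ a b, MB.rel a b → (ρ n).1.rel a b := by
    intro n
    induction n with
    | zero => exact ⟨rfl, fun _ _ h => h⟩
    | succ k ih => exact ⟨ih.1, fun a b h => Mdl.add_rel _ _ (ih.2 a b h)⟩
  have hcomp : ACompat σ ρ := by
    intro n
    refine ⟨rfl, ?_⟩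
    show ((ρ n).1.add (σ (ρ n))).rel (ρ n).2 1
    rw [hst n]
    refine Mdl.add_rel _ _ ((hmono n).2 _ _ ?_)
    by_cases h : n = 0
    · simp only [h, if_pos rfl]
      exact Or.inl ⟨rfl, rfl⟩
    · simp only [if_neg h]
      exact Or.inr ⟨one_ne_zero, rfl⟩
  have hempty : ∀ n, σ (ρ n) = ∅ := by
    intro n
    refine Mdl.costLe_eq_empty _ 1 ?_ (hbd ρ hcomp n)
    intro a b
    rw [(hmono n).1]
    exact Nat.one_lt_two
  have hmod : ∀ n, (ρ n).1 = MB := by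
    intro n
    induction n with
    | zero => rfl
    | succ k ih =>
      rw [hρs k]
      show (ρ k).1.add (σ (ρ k)) = MB
      rw [hempty k, ih, Mdl.add_empty]
  have := hall ρ rfl hcomp
  simp only [SCLPSat, scl_neg_iff] at this
  apply this
  have h1 : ρ 1 = (MB, 1) := Prod.ext (hmod 1) (hst 1)
  rw [h1]
  exact dia0_at_MB1

/-- The witness holds at `(MA, 0)`. -/
lemma witness_MA : SCLSat (MA, 0) sclWitness := by
  classical
  rw [sclWitness]
  simp only [SCLSat]
  refine ⟨fun Ms => if Ms = (MA, 0) then {((1 : ℕ), (2 : ℕ))} else ∅, ?_, ?_, ?_⟩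
  · -- angelic
    intro Ms
    dsimp only
    split
    · rename_i h
      subst h
      intro e he
      rw [Set.mem_singleton_iff] at he
      subst he
      intro hrel
      rcases hrel with ⟨h1, _⟩ | ⟨_, h2⟩ <;> omega
    · exact Set.empty_subset _
  · -- bound
    intro π hπ i
    dsimp only
    split
    · rename_i h
      rw [h]
      exact ⟨{(1, 2)}, by simp, by simp [MA]⟩
    · exact Mdl.costLe_empty _ 1
  · -- all compatible paths
    intro π hπ0 hcomp
    simp only [SCLPSat, scl_neg_iff]
    have h0 : (π 1).1 = MA.add {((1 : ℕ), (2 : ℕ))} := by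
      have := (hcomp 0).1
      rw [hπ0] at this
      simpa using this
    have h1 : (π 1).2 = 1 := by
      have hrel := (hcomp 0).2
      rw [h0, hπ0] at hrel
      rcases hrel with (⟨_, h⟩ | ⟨h, _⟩) | h
      · exact h
      · omega
      · rw [Set.mem_singleton_iff, Prod.mk.injEq] at h
        omega
    -- now refute ⟨∠⁰⟩Xp at π 1
    simp only [SCLSat]
    rintro ⟨σ', hang', hbd', hall'⟩
    -- build path going to state 2
    let ρ : MPath ℕ := fun n =>
      Nat.rec (π 1) (fun _ ih => (ih.1.add (σ' ih), 2)) n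
    have hst : ∀ n, (ρ n).2 = if n = 0 then 1 else 2 := by
      intro n; cases n with
      | zero => simp [h1, ρ]
      | succ k => rfl
    have hmono : ∀ n a b, (π 1).1.rel a b → (ρ n).1.rel a b := by
      intro n
      induction n with
      | zero => exact fun _ _ h => h
      | succ k ih => exact fun a b h => Mdl.add_rel _ _ (ih a b h)
    have hcomp' : ACompat σ' ρ := by
      intro n
      refine ⟨rfl, ?_⟩
      show ((ρ n).1.add (σ' (ρ n))).rel (ρ n).2 2
      rw [hst n]
      refine Mdl.add_rel _ _ (hmono n _ _ ?_)
      rw [h0]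
      by_cases h : n = 0
      · simp only [h, if_pos rfl]
        exact Or.inr rfl
      · simp only [if_neg h]
        exact Or.inl (Or.inr ⟨two_ne_zero, rfl⟩)
    have := hall' ρ rfl hcomp'
    simp only [SCLPSat, SCLSat] at this
    -- (ρ 1).2 = 2 and val is {1}
    have hval : ∀ n, (ρ n).1.val = MA.val := by
      intro n
      induction n with
      | zero =>
        show (π 1).1.val = MA.val
        rw [h0]
        rfl
      | succ k ih => exact ih
    rw [hst 1] at this
    rw [show (ρ 1).1.val = MA.val from hval 1] at this
    simp [MA] at this

/-- CTL is strictly less expressive than SCL: (i) the translation maps every CTL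
formula to an equivalent SCL formula; (ii) the SCL formula `⟨∠¹⟩X[∠⁰]X¬p` has no
equivalent CTL formula. -/
theorem ctl_strictly_less_expressive_than_SCL :
    (∀ φ : CTLF, ∀ (S : Type) (M : Mdl S), M.IsModel → ∀ s : S,
        CTLSat M s φ ↔ SCLSat (M, s) (ctlToSCL φ)) ∧
    ¬ ∃ ψ : CTLF, ∀ (S : Type) (M : Mdl S), M.IsModel → ∀ s : S,
        SCLSat (M, s) sclWitness ↔ CTLSat M s ψ := by
  refine ⟨fun φ S M hM s => ctl_to_scl_correct φ S M hM s, ?_⟩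
  rintro ⟨ψ, h⟩
  have hA : CTLSat MA 0 ψ := (h ℕ MA MA_isModel 0).mp witness_MA
  have hB : CTLSat MB 0 ψ := (ctl_ext MA MB rfl rfl ψ 0).mp hA
  exact not_witness_MB ((h ℕ MB MB_isModel 0).mpr hB)
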